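/- Let K_R, K_T, τ be natural numbers with 1 ≤ τ ≤ K_R and τ < K_T, let j ∈ Fin K_R and let π be a permutation of Fin K_T. Work in the multivariate polynomial ring ℂ[X_{r,c} : r ∈ Fin K_R, c ∈ Fin K_T]. For i ∈ Fin K_T and k ∈ Fin K_R with k ∉ {j+1, …, j+τ−1} (row indices modulo K_R), let M_{k,i} denote the determinant of the τ×τ matrix of indeterminates whose rows are the rows j+1, …, j+τ−1 (mod K_R) followed by row k, and whose columns are π(i), π(i+1), …, π(i+τ−1) (indices modulo K_T). Then the whole family of K_T·(K_R−τ+1) polynomials (M_{k,i}), ranging over all admissible k and all i ∈ Fin K_T, is linearly independent over ℂ. -/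

import Mathlib

/-- The τ×τ channel minor `M_{k,i}` as a polynomial in independent indeterminates
`X_{r,c}` (`r` a receiver, `c` a transmitter): its rows are the rows
`j+1, …, j+τ-1` (mod `K_R`) of the matrix of indeterminates followed by row `k`, and its
columns are `π(i), π(i+1), …, π(i+τ-1)` (arguments mod `K_T`). -/
noncomputable def channelMinor (K_R K_T τ : ℕ) (j : Fin K_R) (π : Equiv.Perm (Fin K_T))
    (k : Fin K_R) (i : Fin K_T) : MvPolynomial (Fin K_R × Fin K_T) ℂ :=
  Matrix.det (Matrix.of fun p q : Fin τ =>
    MvPolynomial.X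
      ((if _ : (p : ℕ) < τ - 1 then
          (⟨((j : ℕ) + (p : ℕ) + 1) % K_R, Nat.mod_lt _ j.pos⟩ : Fin K_R)
        else k),
       π ⟨((i : ℕ) + (q : ℕ)) % K_T, Nat.mod_lt _ i.pos⟩))

/-- Row-index function of the channel minor. -/
def rowFun (K_R τ : ℕ) (j k : Fin K_R) (p : Fin τ) : Fin K_R :=
  if _ : (p : ℕ) < τ - 1 then ⟨((j : ℕ) + (p : ℕ) + 1) % K_R, Nat.mod_lt _ j.pos⟩ else k

/-- Column-index function of the channel minor. -/
def colFun (K_T τ : ℕ) (π : Equiv.Perm (Fin K_T)) (i : Fin K_T) (q : Fin τ) : Fin K_T :=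
  π ⟨((i : ℕ) + (q : ℕ)) % K_T, Nat.mod_lt _ i.pos⟩

lemma mod_add_inj {n a b c : ℕ} (ha : a < n) (hb : b < n)
    (h : (c + a) % n = (c + b) % n) : a = b := by
  have h' : a ≡ b [MOD n] := Nat.ModEq.add_left_cancel' c h
  calc a = a % n := (Nat.mod_eq_of_lt ha).symm
    _ = b % n := h'
    _ = b := Nat.mod_eq_of_lt hb

lemma prod_X_single {S : Type*} {ι : Type*} [DecidableEq S] (s : Finset ι) (b : ι → S) :
    (∏ q ∈ s, (MvPolynomial.X (b q) : MvPolynomial S ℂ))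
      = MvPolynomial.monomial (∑ q ∈ s, Finsupp.single (b q) 1) (1 : ℂ) := by
  classical
  induction s using Finset.induction with
  | empty => simp
  | @insert a t hns ih =>
      rw [Finset.prod_insert hns, Finset.sum_insert hns, ih, MvPolynomial.X,
        MvPolynomial.monomial_mul, one_mul]

lemma exists_of_sum_single_eq {S : Type*} [DecidableEq S] {m : ℕ} {a b : Fin m → S}
    (h : (∑ q : Fin m, Finsupp.single (a q) 1 : S →₀ ℕ)
        = ∑ q : Fin m, Finsupp.single (b q) 1) (q : Fin m) :
    ∃ q', b q' = a q := by
  by_contra hc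
  push_neg at hc
  have h2 := DFunLike.congr_fun h (a q)
  rw [Finsupp.finset_sum_apply, Finsupp.finset_sum_apply] at h2
  have hR : ∑ q' : Fin m, (Finsupp.single (b q') 1 : S →₀ ℕ) (a q) = 0 :=
    Finset.sum_eq_zero fun q' _ => Finsupp.single_eq_of_ne' (hc q')
  rw [hR] at h2
  have := (Finset.sum_eq_zero_iff.mp h2) q (Finset.mem_univ q)
  rw [Finsupp.single_eq_same] at this
  exact one_ne_zero this

lemma window_eq {K_T τ : ℕ} (hτ1 : 1 ≤ τ) (hτT : τ < K_T) {i i' : ℕ}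
    (hi : i < K_T) (hi' : i' < K_T)
    (h1 : ∀ q : ℕ, q < τ → ∃ q' : ℕ, q' < τ ∧ (i + q') % K_T = (i' + q) % K_T)
    (h2 : ∀ q : ℕ, q < τ → ∃ q' : ℕ, q' < τ ∧ (i' + q') % K_T = (i + q) % K_T) :
    i = i' := by
  obtain ⟨q', hq'τ, hq'⟩ := h1 0 hτ1
  rw [Nat.add_zero, Nat.mod_eq_of_lt hi'] at hq'
  rcases Nat.eq_zero_or_pos q' with h0 | h0
  · subst h0
    rw [Nat.add_zero, Nat.mod_eq_of_lt hi] at hq'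
    exact hq'
  · exfalso
    obtain ⟨q'', hq''τ, hq''⟩ := h2 (q' - 1) (by omega)
    -- (i' + (K_T - 1)) % K_T = (i + (q' - 1)) % K_T
    have key : (i' + (K_T - 1)) % K_T = (i + (q' - 1)) % K_T := by
      conv_lhs => rw [← hq']
      rw [Nat.mod_add_mod]
      have : i + q' + (K_T - 1) = i + (q' - 1) + K_T := by omega
      rw [this, Nat.add_mod_right]
    have := mod_add_inj (n := K_T) (a := q'') (b := K_T - 1) (c := i')
      (by omega) (by omega) (hq''.trans key.symm)
    omega

lemma channelMinor_def (K_R K_T τ : ℕ) (j : Fin K_R) (π : Equiv.Perm (Fin K_T))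
    (k : Fin K_R) (i : Fin K_T) :
    channelMinor K_R K_T τ j π k i
      = Matrix.det (Matrix.of fun p q : Fin τ =>
          MvPolynomial.X (rowFun K_R τ j k p, colFun K_T τ π i q)) := rfl

lemma coeff_channelMinor (K_R K_T τ : ℕ) (j : Fin K_R) (π : Equiv.Perm (Fin K_T))
    (k : Fin K_R) (i : Fin K_T) (D : (Fin K_R × Fin K_T) →₀ ℕ) :
    MvPolynomial.coeff D (channelMinor K_R K_T τ j π k i)
      = ∑ σ : Equiv.Perm (Fin τ), ((Equiv.Perm.sign σ : ℤ) : ℂ) *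
          (if (∑ q : Fin τ,
              Finsupp.single (rowFun K_R τ j k (σ q), colFun K_T τ π i q) 1) = D
            then (1 : ℂ) else 0) := by
  classical
  rw [channelMinor_def, Matrix.det_apply, MvPolynomial.coeff_sum]
  refine Finset.sum_congr rfl fun σ _ => ?_
  rw [Units.smul_def, MvPolynomial.coeff_smul]
  have : (∏ q : Fin τ, (Matrix.of fun p q : Fin τ =>
        MvPolynomial.X (rowFun K_R τ j k p, colFun K_T τ π i q)) (σ q) q)
      = MvPolynomial.monomial
          (∑ q : Fin τ, Finsupp.single (rowFun K_R τ j k (σ q), colFun K_T τ π i q) 1)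
          (1 : ℂ) := by
    rw [← prod_X_single]
    rfl
  rw [this, MvPolynomial.coeff_monomial, zsmul_eq_mul]

/-- degree-one case of Lemma 2: the whole family of `K_T·(K_R-τ+1)`
channel minors `M_{k,i}`, ranging over all admissible rows `k` (not among
`j+1, …, j+τ-1` mod `K_R`) and all `i ∈ Fin K_T`, is linearly independent over `ℂ`. -/
theorem channelMinors_linearIndependent
    (K_R K_T τ : ℕ) (hτ1 : 1 ≤ τ) (hτR : τ ≤ K_R) (hτT : τ < K_T)
    (j : Fin K_R) (π : Equiv.Perm (Fin K_T)) :
    LinearIndependent ℂ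
      (fun p : {k : Fin K_R //
          ∀ t : ℕ, t < τ - 1 → (k : ℕ) ≠ ((j : ℕ) + t + 1) % K_R} × Fin K_T =>
        channelMinor K_R K_T τ j π p.1.val p.2) := by
  classical
  -- injectivity of column functions
  have colInj : ∀ i : Fin K_T, Function.Injective (colFun K_T τ π i) := by
    intro i q q' h
    have h' := π.injective h
    have h'' : ((i : ℕ) + (q : ℕ)) % K_T = ((i : ℕ) + (q' : ℕ)) % K_T :=
      congrArg Fin.val h'
    exact Fin.ext (mod_add_inj (lt_trans q.isLt hτT) (lt_trans q'.isLt hτT) h'')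
  -- row function values for admissible k
  have rowNe : ∀ (k : Fin K_R),
      (∀ t : ℕ, t < τ - 1 → (k : ℕ) ≠ ((j : ℕ) + t + 1) % K_R) →
      ∀ p : Fin τ, rowFun K_R τ j k p = k → ¬ ((p : ℕ) < τ - 1) := by
    intro k hk p hp hlt
    rw [rowFun, dif_pos hlt] at hp
    exact hk p hlt (by rw [← hp])
  have rowInj : ∀ (k : Fin K_R),
      (∀ t : ℕ, t < τ - 1 → (k : ℕ) ≠ ((j : ℕ) + t + 1) % K_R) →
      Function.Injective (rowFun K_R τ j k) := by
    intro k hk p p' h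
    by_cases hp : (p : ℕ) < τ - 1 <;> by_cases hp' : (p' : ℕ) < τ - 1
    · rw [rowFun, dif_pos hp, rowFun, dif_pos hp'] at h
      have h'' : ((j : ℕ) + (p : ℕ) + 1) % K_R = ((j : ℕ) + (p' : ℕ) + 1) % K_R :=
        congrArg Fin.val h
      have h3 : ((j : ℕ) + ((p : ℕ) + 1)) % K_R = ((j : ℕ) + ((p' : ℕ) + 1)) % K_R := by
        rw [← Nat.add_assoc, ← Nat.add_assoc]; exact h''
      have h4 := mod_add_inj (n := K_R) (a := (p:ℕ)+1) (b := (p':ℕ)+1) (c := (j:ℕ))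
        (by omega) (by omega) h3
      exact Fin.ext (by omega)
    · exfalso
      rw [rowFun, dif_pos hp, rowFun, dif_neg hp'] at h
      exact hk p hp (by rw [← h])
    · exfalso
      rw [rowFun, dif_neg hp, rowFun, dif_pos hp'] at h
      exact hk p' hp' (by rw [h])
    · exact Fin.ext (by omega)
  rw [linearIndependent_iff']
  intro s g hsum p0 hp0
  set k0 := p0.1.val with hk0def
  set i0 := p0.2 with hi0def
  have hk0 := p0.1.property
  -- the distinguished (diagonal) monomial of M_{p0}
  set D : (Fin K_R × Fin K_T) →₀ ℕ :=
    ∑ q : Fin τ, Finsupp.single (rowFun K_R τ j k0 q, colFun K_T τ π i0 q) 1 with hD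
  have hcoeff := congrArg (MvPolynomial.coeff D) hsum
  rw [MvPolynomial.coeff_sum, MvPolynomial.coeff_zero] at hcoeff
  have hterm : ∀ p ∈ s,
      MvPolynomial.coeff D (g p • channelMinor K_R K_T τ j π p.1.val p.2)
        = g p * MvPolynomial.coeff D (channelMinor K_R K_T τ j π p.1.val p.2) := by
    intro p _
    rw [MvPolynomial.coeff_smul, smul_eq_mul]
  rw [Finset.sum_congr rfl hterm] at hcoeff
  -- coefficient at D of M_{p0} is 1
  have hlast : (⟨τ - 1, by omega⟩ : Fin τ) = (⟨τ - 1, by omega⟩ : Fin τ) := rfl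
  have hdiag : MvPolynomial.coeff D (channelMinor K_R K_T τ j π k0 i0) = 1 := by
    rw [coeff_channelMinor]
    rw [Finset.sum_eq_single (1 : Equiv.Perm (Fin τ))]
    · simp [hD]
    · intro σ _ hσ
      have : ¬ (∑ q : Fin τ,
          Finsupp.single (rowFun K_R τ j k0 (σ q), colFun K_T τ π i0 q) 1) = D := by
        intro hEq
        apply hσ
        ext q
        obtain ⟨q', hq'⟩ := exists_of_sum_single_eq (hD ▸ hEq) q
        have hc : colFun K_T τ π i0 q' = colFun K_T τ π i0 q :=
          congrArg Prod.snd hq'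
        have hq'q : q' = q := colInj i0 hc
        subst hq'q
        have hr : rowFun K_R τ j k0 q' = rowFun K_R τ j k0 (σ q') :=
          congrArg Prod.fst hq'
        exact congrArg Fin.val (rowInj k0 hk0 hr).symm
      rw [if_neg this, mul_zero]
    · intro h
      exact absurd (Finset.mem_univ _) h
  -- coefficient at D of M_p vanishes for p ≠ p0
  have hoff : ∀ p ∈ s, p ≠ p0 →
      g p * MvPolynomial.coeff D (channelMinor K_R K_T τ j π p.1.val p.2) = 0 := by
    intro p _ hne
    rw [coeff_channelMinor]
    have : ∀ σ : Equiv.Perm (Fin τ),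
        ¬ (∑ q : Fin τ,
            Finsupp.single (rowFun K_R τ j p.1.val (σ q), colFun K_T τ π p.2 q) 1) = D := by
      intro σ hEq
      by_cases hkk : p.1.val = k0
      · -- rows agree, so the column windows agree, forcing i = i0
        have hii : p.2 = i0 := by
          have h1 : ∀ q : ℕ, q < τ → ∃ q' : ℕ, q' < τ ∧
              ((p.2 : ℕ) + q') % K_T = ((i0 : ℕ) + q) % K_T := by
            intro q hq
            obtain ⟨q', hq'⟩ := exists_of_sum_single_eq (hD ▸ hEq).symm ⟨q, hq⟩
            refine ⟨q', q'.isLt, ?_⟩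
            have hc : colFun K_T τ π p.2 q' = colFun K_T τ π i0 ⟨q, hq⟩ :=
              congrArg Prod.snd hq'
            have := π.injective hc
            exact congrArg Fin.val this
          have h2 : ∀ q : ℕ, q < τ → ∃ q' : ℕ, q' < τ ∧
              ((i0 : ℕ) + q') % K_T = ((p.2 : ℕ) + q) % K_T := by
            intro q hq
            obtain ⟨q', hq'⟩ := exists_of_sum_single_eq (hD ▸ hEq) ⟨q, hq⟩
            refine ⟨q', q'.isLt, ?_⟩
            have hc : colFun K_T τ π i0 q' = colFun K_T τ π p.2 ⟨q, hq⟩ :=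
              congrArg Prod.snd hq'
            have := π.injective hc
            exact congrArg Fin.val this
          exact Fin.ext (window_eq hτ1 hτT p.2.isLt i0.isLt h1 h2)
        apply hne
        have h1 : p.1 = p0.1 := Subtype.ext hkk
        exact Prod.ext h1 hii
      · -- the variable in row k0 of D cannot occur in M_p
        set qlast : Fin τ := ⟨τ - 1, by omega⟩ with hqlast
        have hr0 : rowFun K_R τ j k0 qlast = k0 := by
          rw [rowFun, dif_neg (by simp [hqlast])]
        obtain ⟨q', hq'⟩ := exists_of_sum_single_eq (hD ▸ hEq).symm qlast
        have hr : rowFun K_R τ j p.1.val (σ q') = rowFun K_R τ j k0 qlast :=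
          congrArg Prod.fst hq'
        rw [hr0] at hr
        by_cases hlt : ((σ q' : Fin τ) : ℕ) < τ - 1
        · rw [rowFun, dif_pos hlt] at hr
          exact hk0 (σ q') hlt (congrArg Fin.val hr).symm
        · rw [rowFun, dif_neg hlt] at hr
          exact hkk hr
    rw [Finset.sum_congr rfl fun σ _ => by rw [if_neg (this σ), mul_zero]]
    rw [Finset.sum_const_zero, mul_zero]
  rw [Finset.sum_eq_single_of_mem p0 hp0 hoff] at hcoeff
  rw [hdiag, mul_one] at hcoeff
  exact hcoeff
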